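/- Let K ≥ 0, let Φ : [0,∞) → L(H) be a family of bounded linear operators on H with operator norm ‖Φ(s)‖ ≤ K for all s, let h ∈ H, and let η : [0,∞) → H be continuous, with s ↦ Φ(s)(η(s)) continuous, satisfying η(t) = S(t)h + ∫₀^t S(t−s) Φ(s)(η(s)) ds for all t ≥ 0. Then for every T > 0 and every r ∈ (0,1) there exists a constant C (depending only on T, r, K and λ₀) such that for all 0 < s ≤ t ≤ T, ‖η(t) − η(s)‖ ≤ C (t−s)^{1−r} (1 + s^{-(1−r)}) ‖h‖. -/

import Mathlib

open Real MeasureTheory Set Filter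
open scoped ENNReal Topology

noncomputable section

/-- `Hsp` is the real Hilbert space `ℓ²` of square-summable real sequences. -/
abbrev Hsp : Type := lp (fun _ : ℕ => ℝ) 2

lemma lp_norm_le_mul (f g : Hsp) (c : ℝ) (hc : 0 ≤ c) (h : ∀ k, ‖f k‖ ≤ c * ‖g k‖) :
    ‖f‖ ≤ c * ‖g‖ := by
  have hp : 0 < (2 : ℝ≥0∞).toReal := by norm_num
  refine lp.norm_le_of_tsum_le hp (by positivity) ?_
  have h2 : (2 : ℝ≥0∞).toReal = (2 : ℝ) := by norm_num
  rw [h2]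
  have hsum_g : Summable (fun k => ‖g k‖ ^ (2:ℝ)) := by
    have := (lp.memℓp g).summable hp
    simpa [h2] using this
  have hsum_f : Summable (fun k => ‖f k‖ ^ (2:ℝ)) := by
    have := (lp.memℓp f).summable hp
    simpa [h2] using this
  calc ∑' k, ‖f k‖ ^ (2:ℝ) ≤ ∑' k, c ^ (2:ℝ) * ‖g k‖ ^ (2:ℝ) := by
        refine Summable.tsum_le_tsum (fun k => ?_) hsum_f (hsum_g.mul_left _)
        have := Real.rpow_le_rpow (norm_nonneg _) (h k) (by norm_num : (0:ℝ) ≤ 2)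
        rwa [Real.mul_rpow hc (norm_nonneg _)] at this
    _ = c ^ (2:ℝ) * ∑' k, ‖g k‖ ^ (2:ℝ) := tsum_mul_left
    _ = (c * ‖g‖) ^ (2:ℝ) := by
        rw [Real.mul_rpow hc (norm_nonneg _)]
        congr 1
        rw [← h2, ← lp.norm_rpow_eq_tsum hp]

lemma one_sub_exp_neg_le_rpow {r x : ℝ} (hr0 : 0 < r) (hr1 : r < 1) (hx : 0 ≤ x) :
    1 - Real.exp (-x) ≤ x ^ (1 - r) := by
  rcases le_or_gt x 1 with hx1 | hx1
  · rcases eq_or_lt_of_le hx with h0 | h0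
    · simp [← h0, Real.zero_rpow (by linarith : (1:ℝ)-r ≠ 0)]
    · have h1 : 1 - Real.exp (-x) ≤ x := by
        have := Real.add_one_le_exp (-x); linarith
      refine h1.trans ?_
      calc x = x ^ (1:ℝ) := (Real.rpow_one x).symm
        _ ≤ x ^ (1 - r) := Real.rpow_le_rpow_of_exponent_ge h0 hx1 (by linarith)
  · have h1 : 1 - Real.exp (-x) ≤ 1 := by
      have := Real.exp_nonneg (-x); linarith
    refine h1.trans ?_
    exact Real.one_le_rpow hx1.le (by linarith)

lemma rpow_mul_exp_neg_le_one {r y : ℝ} (hr0 : 0 < r) (hr1 : r < 1) (hy : 0 ≤ y) :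
    y ^ (1 - r) * Real.exp (-y) ≤ 1 := by
  rcases le_or_gt y 1 with hy1 | hy1
  · have h1 : y ^ (1 - r) ≤ 1 := Real.rpow_le_one hy hy1 (by linarith)
    have h2 : Real.exp (-y) ≤ 1 := Real.exp_le_one_iff.2 (by linarith)
    calc y ^ (1-r) * Real.exp (-y) ≤ 1 * 1 :=
          mul_le_mul h1 h2 (Real.exp_nonneg _) zero_le_one
      _ = 1 := by ring
  · have h1 : y ^ (1 - r) ≤ y := by
      calc y ^ (1-r) ≤ y ^ (1:ℝ) :=
            Real.rpow_le_rpow_of_exponent_le hy1.le (by linarith)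
        _ = y := Real.rpow_one y
    have h2 : y * Real.exp (-y) ≤ 1 := by
      rw [Real.exp_neg]
      rw [mul_inv_le_iff₀ (Real.exp_pos y), one_mul]
      have := Real.add_one_le_exp y; linarith
    calc y ^ (1-r) * Real.exp (-y) ≤ y * Real.exp (-y) :=
          mul_le_mul_of_nonneg_right h1 (Real.exp_nonneg _)
      _ ≤ 1 := h2

lemma exp_diff_le_aux {r l a b : ℝ} (hr0 : 0 < r) (hr1 : r < 1) (hl : 0 < l)
    (hb : 0 < b) (hab : b ≤ a) :
    Real.exp (-(l * b)) - Real.exp (-(l * a)) ≤ (a - b) ^ (1 - r) * b ^ (-(1 - r)) := by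
  have hd : 0 ≤ a - b := by linarith
  have e1 : Real.exp (-(l * a)) = Real.exp (-(l * b)) * Real.exp (-(l * (a - b))) := by
    rw [← Real.exp_add]; ring_nf
  have hb1 : b ^ (1 - r) * b ^ (-(1 - r)) = 1 := by
    rw [← Real.rpow_add hb]; simp
  have step1 : Real.exp (-(l * b)) - Real.exp (-(l * a))
      ≤ Real.exp (-(l * b)) * (l * (a - b)) ^ (1 - r) := by
    rw [e1]
    have h := one_sub_exp_neg_le_rpow hr0 hr1 (mul_nonneg hl.le hd) (x := l * (a - b))
    calc Real.exp (-(l*b)) - Real.exp (-(l*b)) * Real.exp (-(l*(a-b)))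
        = Real.exp (-(l*b)) * (1 - Real.exp (-(l*(a-b)))) := by ring
      _ ≤ Real.exp (-(l*b)) * (l*(a-b)) ^ (1-r) :=
          mul_le_mul_of_nonneg_left h (Real.exp_nonneg _)
  refine step1.trans ?_
  have e2 : Real.exp (-(l*b)) * (l * (a - b)) ^ (1 - r)
      = ((l*b) ^ (1-r) * Real.exp (-(l*b))) * ((a - b) ^ (1-r) * b ^ (-(1-r))) := by
    rw [Real.mul_rpow hl.le hd, Real.mul_rpow hl.le hb.le]
    linear_combination (-(Real.exp (-(l*b)) * l ^ (1-r) * (a-b) ^ (1-r))) * hb1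
  rw [e2]
  have h3 := rpow_mul_exp_neg_le_one hr0 hr1 (mul_nonneg hl.le hb.le) (y := l * b)
  calc ((l*b) ^ (1-r) * Real.exp (-(l*b))) * ((a - b) ^ (1-r) * b ^ (-(1-r)))
      ≤ 1 * ((a - b) ^ (1-r) * b ^ (-(1-r))) :=
        mul_le_mul_of_nonneg_right h3
          (mul_nonneg (Real.rpow_nonneg hd _) (Real.rpow_nonneg hb.le _))
    _ = (a - b) ^ (1-r) * b ^ (-(1-r)) := one_mul _

section Sops
variable {lam : ℕ → ℝ} {S : ℝ → Hsp → Hsp}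
  (hlampos : ∀ k, 0 < lam k)
  (hS : ∀ t : ℝ, 0 ≤ t → ∀ (x : Hsp) (k : ℕ), S t x k = Real.exp (-(lam k * t)) * x k)

include hlampos hS

lemma S_norm_le {t : ℝ} (ht : 0 ≤ t) (x : Hsp) : ‖S t x‖ ≤ ‖x‖ := by
  have := lp_norm_le_mul (S t x) x 1 zero_le_one (fun k => ?_)
  · simpa using this
  · rw [hS t ht x k, one_mul]
    have h1 : Real.exp (-(lam k * t)) ≤ 1 :=
      Real.exp_le_one_iff.2 (by nlinarith [hlampos k])
    calc ‖Real.exp (-(lam k * t)) * x k‖ = Real.exp (-(lam k * t)) * ‖x k‖ := by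
          rw [norm_mul, Real.norm_eq_abs (Real.exp _), abs_of_pos (Real.exp_pos _)]
      _ ≤ 1 * ‖x k‖ := mul_le_mul_of_nonneg_right h1 (norm_nonneg _)
      _ = ‖x k‖ := one_mul _

lemma S_sub_apply {t : ℝ} (ht : 0 ≤ t) (v w : Hsp) : S t v - S t w = S t (v - w) := by
  apply lp.ext
  funext k
  have h1 : (S t v - S t w) k = S t v k - S t w k := by
    rw [lp.coeFn_sub]; rfl
  rw [h1, hS t ht v k, hS t ht w k, hS t ht (v - w) k]
  have h2 : (v - w) k = v k - w k := by rw [lp.coeFn_sub]; rfl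
  rw [h2]; ring

lemma S_sub_norm_le {r a b : ℝ} (hr0 : 0 < r) (hr1 : r < 1) (hb : 0 < b) (hab : b ≤ a)
    (x : Hsp) :
    ‖S a x - S b x‖ ≤ ((a - b) ^ (1 - r) * b ^ (-(1 - r))) * ‖x‖ := by
  have hd : 0 ≤ a - b := by linarith
  refine lp_norm_le_mul _ _ _ (mul_nonneg (Real.rpow_nonneg hd _) (Real.rpow_nonneg hb.le _))
    (fun k => ?_)
  have h1 : (S a x - S b x) k = S a x k - S b x k := by rw [lp.coeFn_sub]; rfl
  rw [h1, hS a (by linarith) x k, hS b hb.le x k]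
  have h2 : Real.exp (-(lam k * a)) * x k - Real.exp (-(lam k * b)) * x k
      = (Real.exp (-(lam k * a)) - Real.exp (-(lam k * b))) * x k := by ring
  rw [h2, norm_mul]
  refine mul_le_mul_of_nonneg_right ?_ (norm_nonneg _)
  rw [Real.norm_eq_abs, abs_sub_comm, abs_of_nonneg (by
    have := Real.exp_le_exp.2 (show -(lam k * a) ≤ -(lam k * b) by nlinarith [hlampos k])
    linarith)]
  exact exp_diff_le_aux hr0 hr1 (hlampos k) hb hab

lemma S_strong_cont (x : Hsp) : ContinuousOn (fun τ => S τ x) (Set.Ici 0) := by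
  intro τ0 hτ0
  have hτ0' : (0:ℝ) ≤ τ0 := hτ0
  have hp : 0 < (2 : ℝ≥0∞).toReal := by norm_num
  have h2 : (2 : ℝ≥0∞).toReal = (2 : ℝ) := by norm_num
  set D : ℝ → ℝ := fun τ => ∑' k, ‖(Real.exp (-(lam k * τ)) - Real.exp (-(lam k * τ0))) * x k‖ ^ (2:ℝ)
    with hD
  have hsum_x : Summable (fun k => ‖x k‖ ^ (2:ℝ)) := by
    have := (lp.memℓp x).summable hp
    simpa [h2] using this
  have hDtend : Tendsto D (𝓝[Set.Ici 0] τ0) (𝓝 (∑' _ : ℕ, (0:ℝ))) := by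
    refine tendsto_tsum_of_dominated_convergence (g := fun _ => (0:ℝ)) (f := fun τ k =>
        ‖(Real.exp (-(lam k * τ)) - Real.exp (-(lam k * τ0))) * x k‖ ^ (2:ℝ))
      (bound := fun k => ‖x k‖ ^ (2:ℝ)) hsum_x (fun k => ?_) ?_
    · have hc : Continuous (fun τ : ℝ =>
          ‖(Real.exp (-(lam k * τ)) - Real.exp (-(lam k * τ0))) * x k‖ ^ (2:ℝ)) := by
        apply Continuous.rpow_const
        · exact ((Real.continuous_exp.comp (by fun_prop)).sub continuous_const).mul
            continuous_const |>.norm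
        · intro _; right; norm_num
      have := hc.tendsto τ0
      simp only [sub_self, zero_mul, norm_zero, Real.zero_rpow (by norm_num : (2:ℝ) ≠ 0)] at this
      exact this.mono_left nhdsWithin_le_nhds
    · filter_upwards [self_mem_nhdsWithin] with τ hτ k
      have hτ' : (0:ℝ) ≤ τ := hτ
      have hnn : (0:ℝ) ≤ ‖(Real.exp (-(lam k * τ)) - Real.exp (-(lam k * τ0))) * x k‖ ^ (2:ℝ) :=
        Real.rpow_nonneg (norm_nonneg _) _
      rw [Real.norm_eq_abs, abs_of_nonneg hnn]
      have hb : ‖(Real.exp (-(lam k * τ)) - Real.exp (-(lam k * τ0))) * x k‖ ≤ 1 * ‖x k‖ := by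
        rw [norm_mul]
        refine mul_le_mul_of_nonneg_right ?_ (norm_nonneg _)
        rw [Real.norm_eq_abs, abs_sub_le_iff]
        have e1 : Real.exp (-(lam k * τ)) ≤ 1 :=
          Real.exp_le_one_iff.2 (by nlinarith [hlampos k])
        have e2 : Real.exp (-(lam k * τ0)) ≤ 1 :=
          Real.exp_le_one_iff.2 (by nlinarith [hlampos k])
        have e3 := Real.exp_pos (-(lam k * τ))
        have e4 := Real.exp_pos (-(lam k * τ0))
        constructor <;> linarith
      calc ‖(Real.exp (-(lam k * τ)) - Real.exp (-(lam k * τ0))) * x k‖ ^ (2:ℝ)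
          ≤ (1 * ‖x k‖) ^ (2:ℝ) :=
            Real.rpow_le_rpow (norm_nonneg _) hb (by norm_num)
        _ = ‖x k‖ ^ (2:ℝ) := by rw [one_mul]
  rw [tsum_zero] at hDtend
  have key : ∀ τ ∈ Set.Ici (0:ℝ), ‖S τ x - S τ0 x‖ = Real.sqrt (D τ) := by
    intro τ hτ
    have hτ' : (0:ℝ) ≤ τ := hτ
    have hcoord : ∀ k : ℕ, (S τ x - S τ0 x) k
        = (Real.exp (-(lam k * τ)) - Real.exp (-(lam k * τ0))) * x k := by
      intro k
      have h1 : (S τ x - S τ0 x) k = S τ x k - S τ0 x k := by rw [lp.coeFn_sub]; rfl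
      rw [h1, hS τ hτ' x k, hS τ0 hτ0' x k]; ring
    have hnorm : ‖S τ x - S τ0 x‖ ^ (2:ℝ) = D τ := by
      rw [← h2, lp.norm_rpow_eq_tsum hp, hD]
      rw [h2]
      exact tsum_congr (fun k => by rw [hcoord k])
    rw [← hnorm, show ((2:ℝ)) = ((2:ℕ):ℝ) by norm_num, Real.rpow_natCast,
      Real.sqrt_sq (norm_nonneg _)]
  rw [ContinuousWithinAt, tendsto_iff_norm_sub_tendsto_zero]
  have hsq : Tendsto (fun τ => Real.sqrt (D τ)) (𝓝[Set.Ici 0] τ0) (𝓝 0) := by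
    have := (Real.continuous_sqrt.tendsto' 0 0 (by simp)).comp hDtend
    exact this
  refine hsq.congr' ?_
  filter_upwards [self_mem_nhdsWithin] with τ hτ
  rw [key τ hτ]

end Sops

section Sops2
variable {lam : ℕ → ℝ} {S : ℝ → Hsp → Hsp}
  (hlampos : ∀ k, 0 < lam k)
  (hS : ∀ t : ℝ, 0 ≤ t → ∀ (x : Hsp) (k : ℕ), S t x k = Real.exp (-(lam k * t)) * x k)

include hlampos hS

lemma integrand_contOn {g : ℝ → Hsp} (hg : ContinuousOn g (Set.Ici 0)) {a : ℝ} (ha : 0 ≤ a) :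
    ContinuousOn (fun u => S (a - u) (g u)) (Set.Icc 0 a) := by
  intro u0 hu0
  obtain ⟨hu00, hu0a⟩ := hu0
  rw [ContinuousWithinAt, tendsto_iff_norm_sub_tendsto_zero]
  set B : ℝ → ℝ := fun u => ‖g u - g u0‖ + ‖S (a-u) (g u0) - S (a-u0) (g u0)‖ with hB
  have hbound : ∀ u ∈ Set.Icc 0 a, ‖S (a-u) (g u) - S (a-u0) (g u0)‖ ≤ B u := by
    intro u hu
    have hau : (0:ℝ) ≤ a - u := by linarith [hu.2]
    calc ‖S (a-u) (g u) - S (a-u0) (g u0)‖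
        ≤ ‖S (a-u) (g u) - S (a-u) (g u0)‖ + ‖S (a-u) (g u0) - S (a-u0) (g u0)‖ :=
          norm_sub_le_norm_sub_add_norm_sub _ _ _
      _ ≤ B u := by
          rw [hB]
          refine add_le_add_left ?_ _
          rw [S_sub_apply hlampos hS hau]
          exact S_norm_le hlampos hS hau _
  have hgc : Tendsto (fun u => ‖g u - g u0‖) (𝓝[Set.Icc 0 a] u0) (𝓝 0) := by
    have h1 : ContinuousWithinAt g (Set.Icc 0 a) u0 :=
      (hg.mono (fun y hy => hy.1)).continuousWithinAt ⟨hu00, hu0a⟩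
    rw [ContinuousWithinAt, tendsto_iff_norm_sub_tendsto_zero] at h1
    exact h1
  have hsc : Tendsto (fun u => ‖S (a-u) (g u0) - S (a-u0) (g u0)‖)
      (𝓝[Set.Icc 0 a] u0) (𝓝 0) := by
    have h1 : ContinuousWithinAt (fun τ => S τ (g u0)) (Set.Ici 0) (a - u0) :=
      S_strong_cont hlampos hS (g u0) (a - u0) (by simp; linarith)
    have h2 : ContinuousWithinAt (fun u : ℝ => a - u) (Set.Icc 0 a) u0 :=
      (continuous_const.sub continuous_id).continuousWithinAt
    have h3 : Set.MapsTo (fun u : ℝ => a - u) (Set.Icc 0 a) (Set.Ici 0) := by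
      intro y hy; simp; linarith [hy.2]
    have h4 := h1.comp h2 h3
    rw [ContinuousWithinAt, tendsto_iff_norm_sub_tendsto_zero] at h4
    exact h4
  have hBt : Tendsto B (𝓝[Set.Icc 0 a] u0) (𝓝 0) := by
    have := hgc.add hsc
    simpa using this
  refine squeeze_zero' ?_ ?_ hBt
  · filter_upwards with u; exact norm_nonneg _
  · filter_upwards [self_mem_nhdsWithin] with u hu; exact hbound u hu

end Sops2

lemma gronwallBound_le_aux {K ε x T' : ℝ} (hK : 0 ≤ K) (hε : 0 ≤ ε) (hx : 0 ≤ x)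
    (hxT : x ≤ T') : gronwallBound 0 K ε x ≤ ε * T' * Real.exp (K * T') := by
  have hT' : 0 ≤ T' := hx.trans hxT
  have hexp1 : (1:ℝ) ≤ Real.exp (K * T') := by
    rw [Real.one_le_exp_iff]; positivity
  rcases eq_or_lt_of_le hK with h0 | hKpos
  · rw [gronwallBound, if_pos h0.symm]
    calc 0 + ε * x ≤ ε * T' * 1 := by nlinarith
      _ ≤ ε * T' * Real.exp (K * T') := by
        rw [mul_assoc, mul_assoc]
        exact mul_le_mul_of_nonneg_left (by nlinarith) hε
  · rw [gronwallBound, if_neg (ne_of_gt hKpos)]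
    have h1 : 1 - K * x ≤ Real.exp (-(K*x)) := by
      have := Real.add_one_le_exp (-(K*x)); linarith
    have h2 : Real.exp (-(K*x)) * Real.exp (K*x) = 1 := by
      rw [← Real.exp_add]; simp
    have h3 : Real.exp (K*x) - 1 ≤ K * x * Real.exp (K*x) := by
      nlinarith [Real.exp_pos (K*x)]
    have h4 : Real.exp (K*x) ≤ Real.exp (K*T') :=
      Real.exp_le_exp.2 (mul_le_mul_of_nonneg_left hxT hK)
    have h5 : ε / K * (Real.exp (K * x) - 1) ≤ ε * x * Real.exp (K*x) := by
      rw [div_mul_eq_mul_div, div_le_iff₀ hKpos]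
      nlinarith
    have h6 : ε * x * Real.exp (K*x) ≤ ε * T' * Real.exp (K*T') := by
      have hx1 : ε * x ≤ ε * T' := by nlinarith
      exact mul_le_mul hx1 h4 (Real.exp_pos _).le (by positivity)
    calc (0:ℝ) * Real.exp (K * x) + ε / K * (Real.exp (K * x) - 1)
        = ε / K * (Real.exp (K * x) - 1) := by ring
      _ ≤ ε * x * Real.exp (K*x) := h5
      _ ≤ ε * T' * Real.exp (K*T') := h6

set_option maxHeartbeats 1000000 in
/-- Proposition B.5: time-Hölder regularity of the first variation `η` of the averaged
flow, solving `η(t) = S(t)h + ∫₀ᵗ S(t−s) Φ(s)(η(s)) ds`: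
`‖η(t) − η(s)‖ ≤ C (t−s)^{1−r} (1 + s^{-(1−r)}) ‖h‖` for `0 < s ≤ t ≤ T`,
`C` depending only on `T`, `r`, `K`, `λ₀`. -/
theorem stmt13
    (lam : ℕ → ℝ) (lam0 : ℝ) (hlam0 : 0 < lam0) (hlam : ∀ k, lam0 ≤ lam k)
    (S : ℝ → Hsp → Hsp)
    (hS : ∀ t : ℝ, 0 ≤ t → ∀ (x : Hsp) (k : ℕ), S t x k = Real.exp (-(lam k * t)) * x k)
    (K : ℝ) (hK : 0 ≤ K)
    (T : ℝ) (hT : 0 < T) (r : ℝ) (hr : r ∈ Set.Ioo (0:ℝ) 1) :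
    ∃ C > 0, ∀ Φ : ℝ → Hsp →L[ℝ] Hsp, (∀ s : ℝ, 0 ≤ s → ‖Φ s‖ ≤ K) →
      ∀ h : Hsp, ∀ η : ℝ → Hsp,
      ContinuousOn η (Set.Ici 0) →
      ContinuousOn (fun s => Φ s (η s)) (Set.Ici 0) →
      (∀ t : ℝ, 0 ≤ t → η t = S t h + ∫ s in (0:ℝ)..t, S (t - s) (Φ s (η s))) →
      ∀ s t : ℝ, 0 < s → s ≤ t → t ≤ T →
        ‖η t - η s‖ ≤ C * (t - s) ^ (1 - r) * (1 + s ^ (-(1 - r))) * ‖h‖ := by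
  obtain ⟨hr0, hr1⟩ := hr
  have hlampos : ∀ k, 0 < lam k := fun k => lt_of_lt_of_le hlam0 (hlam k)
  set M : ℝ := 1 + K * T * Real.exp (K * T) with hM
  have hMpos : 0 < M := by positivity
  have hTr : (0:ℝ) < T ^ r := Real.rpow_pos_of_pos hT r
  set C : ℝ := 1 + K * M * T ^ r * (1/r + 1) with hC
  have hCpos : 0 < C := by positivity
  refine ⟨C, hCpos, ?_⟩
  intro Φ hΦ h η hηc hgc heq s t hs hst htT
  set g : ℝ → Hsp := fun u => Φ u (η u) with hg
  have h0s : (0:ℝ) ≤ s := hs.le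
  have h0t : (0:ℝ) ≤ t := h0s.trans hst
  have hsT : s ≤ T := hst.trans htT
  -- continuity of the norm of η
  have hnormIci : ContinuousOn (fun u => ‖η u‖) (Set.Ici 0) := hηc.norm
  have hηint : ∀ τ : ℝ, 0 ≤ τ → IntervalIntegrable (fun u => ‖η u‖) volume 0 τ := by
    intro τ hτ
    refine (hnormIci.mono ?_).intervalIntegrable
    rw [Set.uIcc_of_le hτ]
    exact fun y hy => hy.1
  set G : ℝ → ℝ := fun τ => ∫ u in (0:ℝ)..τ, ‖η u‖ with hG
  have hGnn : ∀ τ : ℝ, 0 ≤ τ → 0 ≤ G τ := fun τ hτ =>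
    intervalIntegral.integral_nonneg hτ (fun u _ => norm_nonneg _)
  -- key pointwise inequality from the mild equation
  have hηle : ∀ τ : ℝ, 0 ≤ τ → ‖η τ‖ ≤ ‖h‖ + K * G τ := by
    intro τ hτ
    rw [heq τ hτ]
    have hIb : IntervalIntegrable (fun u => K * ‖η u‖) volume 0 τ := (hηint τ hτ).const_mul K
    have hae : ∀ᵐ u ∂volume.restrict (Set.uIoc 0 τ), ‖S (τ - u) (g u)‖ ≤ K * ‖η u‖ := by
      filter_upwards [ae_restrict_mem measurableSet_uIoc] with u hu
      rw [Set.uIoc_of_le hτ] at hu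
      have h1 : ‖S (τ - u) (g u)‖ ≤ ‖g u‖ :=
        S_norm_le hlampos hS (by linarith [hu.1, hu.2] : (0:ℝ) ≤ τ - u) _
      refine h1.trans ?_
      calc ‖g u‖ ≤ ‖Φ u‖ * ‖η u‖ := (Φ u).le_opNorm _
        _ ≤ K * ‖η u‖ := mul_le_mul_of_nonneg_right (hΦ u hu.1.le) (norm_nonneg _)
    have h2 := intervalIntegral.norm_integral_le_abs_of_norm_le hae hIb
    have h3 : |∫ u in (0:ℝ)..τ, K * ‖η u‖| = K * G τ := by
      rw [intervalIntegral.integral_const_mul]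
      exact abs_of_nonneg (mul_nonneg hK (hGnn τ hτ))
    rw [h3] at h2
    calc ‖S τ h + ∫ u in (0:ℝ)..τ, S (τ - u) (g u)‖
        ≤ ‖S τ h‖ + ‖∫ u in (0:ℝ)..τ, S (τ - u) (g u)‖ := norm_add_le _ _
      _ ≤ ‖h‖ + K * G τ := add_le_add (S_norm_le hlampos hS hτ h) h2
  -- Gronwall
  have hηbound : ∀ u ∈ Set.Icc (0:ℝ) T, ‖η u‖ ≤ M * ‖h‖ := by
    have hGc : ContinuousOn G (Set.Icc 0 T) := by
      have h1 := intervalIntegral.continuousOn_primitive_interval' (hηint T hT.le) (a := 0)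
        (by rw [Set.uIcc_of_le hT.le]; exact ⟨le_rfl, hT.le⟩)
      rwa [Set.uIcc_of_le hT.le] at h1
    have hG' : ∀ τ ∈ Set.Ico (0:ℝ) T, HasDerivWithinAt G (‖η τ‖) (Set.Ici τ) τ := by
      intro τ hτ
      have hsub : Set.Ici τ ⊆ Set.Ici (0:ℝ) := Set.Ici_subset_Ici.2 hτ.1
      have hsub2 : Set.Ioi τ ⊆ Set.Ici (0:ℝ) :=
        fun y hy => le_trans hτ.1 (le_of_lt hy)
      have hmeas : StronglyMeasurableAtFilter (fun u => ‖η u‖) (𝓝[Set.Ioi τ] τ) volume :=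
        (hnormIci.mono hsub2).stronglyMeasurableAtFilter_nhdsWithin measurableSet_Ioi τ
      have hcw : ContinuousWithinAt (fun u => ‖η u‖) (Set.Ioi τ) τ :=
        ((hnormIci.mono hsub).continuousWithinAt Set.self_mem_Ici).mono Set.Ioi_subset_Ici_self
      exact intervalIntegral.integral_hasDerivWithinAt_right (hηint τ hτ.1) hmeas hcw
    have hbd : ∀ τ ∈ Set.Ico (0:ℝ) T, ‖‖η τ‖‖ ≤ K * ‖G τ‖ + ‖h‖ := by
      intro τ hτ
      rw [Real.norm_eq_abs, abs_of_nonneg (norm_nonneg _), Real.norm_eq_abs,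
        abs_of_nonneg (hGnn τ hτ.1)]
      linarith [hηle τ hτ.1]
    have hG0 : ‖G 0‖ ≤ 0 := by
      simp [hG, intervalIntegral.integral_same]
    have hGron := norm_le_gronwallBound_of_norm_deriv_right_le hGc hG' hG0 hbd
    intro u hu
    have h1 := hGron u hu
    rw [sub_zero] at h1
    have h2 : G u ≤ ‖h‖ * T * Real.exp (K * T) := by
      calc G u ≤ |G u| := le_abs_self _
        _ = ‖G u‖ := (Real.norm_eq_abs _).symm
        _ ≤ gronwallBound 0 K ‖h‖ u := h1
        _ ≤ ‖h‖ * T * Real.exp (K * T) :=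
            gronwallBound_le_aux hK (norm_nonneg h) hu.1 hu.2
    have h3 := hηle u hu.1
    have h4 : K * G u ≤ K * (‖h‖ * T * Real.exp (K * T)) :=
      mul_le_mul_of_nonneg_left h2 hK
    rw [hM]
    nlinarith [norm_nonneg h]
  have hgbound : ∀ u ∈ Set.Icc (0:ℝ) T, ‖g u‖ ≤ K * (M * ‖h‖) := by
    intro u hu
    calc ‖g u‖ ≤ ‖Φ u‖ * ‖η u‖ := (Φ u).le_opNorm _
      _ ≤ K * (M * ‖h‖) :=
          mul_le_mul (hΦ u hu.1) (hηbound u hu) (norm_nonneg _) hK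
  -- integrability of the integrands
  have hFc : ∀ a : ℝ, 0 ≤ a → ContinuousOn (fun u => S (a - u) (g u)) (Set.Icc 0 a) :=
    fun a ha => integrand_contOn hlampos hS hgc ha
  have hint1 : IntervalIntegrable (fun u => S (t - u) (g u)) volume 0 s := by
    refine ((hFc t h0t).mono ?_).intervalIntegrable
    rw [Set.uIcc_of_le h0s]; exact Set.Icc_subset_Icc le_rfl hst
  have hint2 : IntervalIntegrable (fun u => S (t - u) (g u)) volume s t := by
    refine ((hFc t h0t).mono ?_).intervalIntegrable
    rw [Set.uIcc_of_le hst]; exact Set.Icc_subset_Icc h0s le_rfl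
  have hint3 : IntervalIntegrable (fun u => S (s - u) (g u)) volume 0 s := by
    refine ((hFc s h0s).mono ?_).intervalIntegrable
    rw [Set.uIcc_of_le h0s]
  -- decomposition
  have hdiff : η t - η s = (S t h - S s h)
      + (∫ u in (0:ℝ)..s, (S (t - u) (g u) - S (s - u) (g u)))
      + ∫ u in s..t, S (t - u) (g u) := by
    rw [heq t h0t, heq s h0s,
      ← intervalIntegral.integral_add_adjacent_intervals hint1 hint2,
      intervalIntegral.integral_sub hint1 hint3]
    abel
  -- term estimates
  have htA : ‖S t h - S s h‖ ≤ ((t - s) ^ (1 - r) * s ^ (-(1 - r))) * ‖h‖ :=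
    S_sub_norm_le hlampos hS hr0 hr1 hs hst h
  set B1 : ℝ := (K * (M * ‖h‖)) * (t - s) ^ (1 - r) with hB1
  have hB1nn : 0 ≤ B1 := by
    have : (0:ℝ) ≤ (t - s) ^ (1 - r) := Real.rpow_nonneg (by linarith) _
    positivity
  have htB : ‖∫ u in (0:ℝ)..s, (S (t - u) (g u) - S (s - u) (g u))‖ ≤ B1 * (s ^ r / r) := by
    have hIb : IntervalIntegrable (fun u => B1 * (s - u) ^ (-(1 - r))) volume 0 s := by
      have h1 : IntervalIntegrable (fun v : ℝ => v ^ (-(1 - r))) volume 0 s :=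
        intervalIntegral.intervalIntegrable_rpow' (by linarith)
      have h2 := (h1.comp_sub_left s).symm
      simp only [sub_self, sub_zero] at h2
      exact h2.const_mul B1
    have hne : ∀ᵐ u ∂volume.restrict (Set.uIoc 0 s), u ≠ s := by
      refine ae_restrict_of_ae ?_
      rw [Filter.eventually_iff, mem_ae_iff]
      have : {u : ℝ | u ≠ s}ᶜ = {s} := by ext u; simp
      rw [this]
      exact measure_singleton s
    have hae : ∀ᵐ u ∂volume.restrict (Set.uIoc 0 s),
        ‖S (t - u) (g u) - S (s - u) (g u)‖ ≤ B1 * (s - u) ^ (-(1 - r)) := by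
      filter_upwards [hne, ae_restrict_mem measurableSet_uIoc] with u hu1 hu2
      rw [Set.uIoc_of_le h0s] at hu2
      have hus : u < s := lt_of_le_of_ne hu2.2 hu1
      have key := S_sub_norm_le hlampos hS hr0 hr1
        (show (0:ℝ) < s - u by linarith) (show s - u ≤ t - u by linarith) (g u)
      have htu : t - u - (s - u) = t - s := by ring
      rw [htu] at key
      refine key.trans ?_
      have hgb := hgbound u ⟨hu2.1.le, by linarith⟩
      have hnn : (0:ℝ) ≤ (t - s) ^ (1 - r) * (s - u) ^ (-(1 - r)) :=
        mul_nonneg (Real.rpow_nonneg (by linarith) _) (Real.rpow_nonneg (by linarith) _)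
      calc ((t - s) ^ (1 - r) * (s - u) ^ (-(1 - r))) * ‖g u‖
          ≤ ((t - s) ^ (1 - r) * (s - u) ^ (-(1 - r))) * (K * (M * ‖h‖)) :=
            mul_le_mul_of_nonneg_left hgb hnn
        _ = B1 * (s - u) ^ (-(1 - r)) := by rw [hB1]; ring
    have h2 := intervalIntegral.norm_integral_le_abs_of_norm_le hae hIb
    have hval : (∫ u in (0:ℝ)..s, B1 * (s - u) ^ (-(1 - r))) = B1 * (s ^ r / r) := by
      rw [intervalIntegral.integral_const_mul]
      congr 1
      have h3 := intervalIntegral.integral_comp_sub_left (a := (0:ℝ)) (b := s)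
        (fun v => v ^ (-(1 - r))) s
      rw [h3, sub_self, sub_zero, integral_rpow (Or.inl (by linarith))]
      rw [Real.zero_rpow (by linarith : -(1 - r) + 1 ≠ 0)]
      have : -(1 - r) + 1 = r := by ring
      rw [this]
      ring
    rw [hval] at h2
    refine h2.trans ?_
    rw [abs_of_nonneg (by positivity)]
  have htC : ‖∫ u in s..t, S (t - u) (g u)‖ ≤ (K * (M * ‖h‖)) * (t - s) := by
    have h1 := intervalIntegral.norm_integral_le_of_norm_le_const
      (C := K * (M * ‖h‖)) (f := fun u => S (t - u) (g u)) (a := s) (b := t) ?_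
    · rwa [abs_of_nonneg (by linarith : (0:ℝ) ≤ t - s)] at h1
    · intro u hu
      rw [Set.uIoc_of_le hst] at hu
      have h2 : ‖S (t - u) (g u)‖ ≤ ‖g u‖ :=
        S_norm_le hlampos hS (by linarith [hu.2] : (0:ℝ) ≤ t - u) _
      exact h2.trans (hgbound u ⟨by linarith [hu.1], by linarith [hu.2]⟩)
  -- final arithmetic
  have hsr : s ^ r ≤ T ^ r := Real.rpow_le_rpow h0s hsT hr0.le
  have hdr : t - s ≤ (t - s) ^ (1 - r) * T ^ r := by
    rcases eq_or_lt_of_le hst with he | hlt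
    · rw [← he]
      simp only [sub_self]
      exact mul_nonneg (Real.rpow_nonneg le_rfl _) hTr.le
    · have hd : (0:ℝ) < t - s := by linarith
      have h1 : t - s = (t - s) ^ (1 - r) * (t - s) ^ r := by
        rw [← Real.rpow_add hd]; simp
      calc t - s = (t - s) ^ (1 - r) * (t - s) ^ r := h1
        _ ≤ (t - s) ^ (1 - r) * T ^ r :=
            mul_le_mul_of_nonneg_left
              (Real.rpow_le_rpow hd.le (show t - s ≤ T by linarith) hr0.le)
              (Real.rpow_nonneg hd.le _)
  set P : ℝ := (t - s) ^ (1 - r) with hP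
  set Q : ℝ := s ^ (-(1 - r)) with hQ
  have hPnn : 0 ≤ P := Real.rpow_nonneg (by linarith) _
  have hQnn : 0 ≤ Q := Real.rpow_nonneg h0s _
  have hfinal : ‖η t - η s‖ ≤ P * Q * ‖h‖ + B1 * (s ^ r / r) + K * (M * ‖h‖) * (t - s) := by
    rw [hdiff]
    exact le_trans (norm_add₃_le) (add_le_add (add_le_add htA htB) htC)
  refine hfinal.trans ?_
  have hsrr : B1 * (s ^ r / r) ≤ K * (M * ‖h‖) * P * (T ^ r / r) := by
    rw [hB1]
    have h1 : s ^ r / r ≤ T ^ r / r := by gcongr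
    calc K * (M * ‖h‖) * P * (s ^ r / r) ≤ K * (M * ‖h‖) * P * (T ^ r / r) := by
          refine mul_le_mul_of_nonneg_left h1 ?_
          have : (0:ℝ) ≤ P := hPnn
          positivity
      _ = K * (M * ‖h‖) * P * (T ^ r / r) := rfl
  have htC' : K * (M * ‖h‖) * (t - s) ≤ K * (M * ‖h‖) * (P * T ^ r) :=
    mul_le_mul_of_nonneg_left hdr (by positivity)
  have hc0 : (0:ℝ) ≤ K * M * T ^ r := by positivity
  have hrinv : (0:ℝ) ≤ 1 / r := by positivity
  have key : Q + (K * M * T ^ r) / r + K * M * T ^ r ≤ C * (1 + Q) := by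
    rw [hC]
    have h1 : 0 ≤ (K * M * T ^ r) * Q := mul_nonneg hc0 hQnn
    have h2 : 0 ≤ ((K * M * T ^ r) * (1/r)) * Q := mul_nonneg (mul_nonneg hc0 hrinv) hQnn
    have h3 : (K * M * T ^ r) / r = (K * M * T ^ r) * (1/r) := by ring
    nlinarith
  calc P * Q * ‖h‖ + B1 * (s ^ r / r) + K * (M * ‖h‖) * (t - s)
      ≤ P * Q * ‖h‖ + K * (M * ‖h‖) * P * (T ^ r / r) + K * (M * ‖h‖) * (P * T ^ r) :=
        add_le_add (add_le_add le_rfl hsrr) htC'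
    _ = (Q + (K * M * T ^ r) / r + K * M * T ^ r) * (P * ‖h‖) := by ring
    _ ≤ (C * (1 + Q)) * (P * ‖h‖) :=
        mul_le_mul_of_nonneg_right key (mul_nonneg hPnn (norm_nonneg h))
    _ = C * P * (1 + Q) * ‖h‖ := by ring

end
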